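/- Let {x_n}, {y_n}, {z_n} be complex sequences indexed by nonzero integers satisfying the trilinear system and the parity condition. Then for every integer n ≥ 2 and every m with 1 ≤ m ≤ n−1, one has (|z_m|² − |y_m|²)·x_n = (|z_{n−m}|² − |y_{n−m}|²)·x_n. -/

import Mathlib

theorem stmt_6 (x y z : ℤ → ℂ)
    (hsys : ∀ n1 n2 : ℤ, n1 ≠ 0 → n2 ≠ 0 → n1 + n2 ≠ 0 →
      x n1 * y n2 - x (n1 + n2) * z n2 + y (n1 + n2) * z (-n1) = 0)
    (hpar : ∀ n : ℤ, x (-n) = (starRingEnd ℂ) (x n) ∧ y (-n) = (starRingEnd ℂ) (y n) ∧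
      z (-n) = (starRingEnd ℂ) (z n)) :
    ∀ n m : ℤ, 2 ≤ n → 1 ≤ m → m ≤ n - 1 →
      ((‖z m‖ ^ 2 - ‖y m‖ ^ 2 : ℝ) : ℂ) * x n
        = ((‖z (n - m)‖ ^ 2 - ‖y (n - m)‖ ^ 2 : ℝ) : ℂ) * x n := by
  intro n m hn hm hmn
  have hm0 : m ≠ 0 := by omega
  have hn0 : n ≠ 0 := by omega
  have hnm0 : n - m ≠ 0 := by omega
  have A := hsys m (n - m) hm0 hnm0 (by omega)
  have B := hsys (n - m) m hnm0 hm0 (by omega)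
  have E := hsys n (-m) hn0 (by omega) (by omega)
  have F := hsys n (m - n) hn0 (by omega) (by omega)
  rw [show m + (n - m) = n by ring] at A
  rw [show n - m + m = n by ring, show -(n - m) = m - n by ring] at B
  rw [show n + -m = n - m by ring] at E
  rw [show n + (m - n) = m by ring] at F
  have hzm := (hpar m).2.2
  have hym := (hpar m).2.1
  have hznm := (hpar (n - m)).2.2
  have hynm := (hpar (n - m)).2.1
  rw [show -(n - m) = m - n by ring] at hznm hynm
  have goal2 : (z m * z (-m) - y m * y (-m)) * x n
      = (z (n - m) * z (m - n) - y (n - m) * y (m - n)) * x n := by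
    linear_combination (-(z (-m))) * B - y m * E + z (m - n) * A + y (n - m) * F
  rw [hzm, hym, hznm, hynm] at goal2
  rw [Complex.sq_norm, Complex.sq_norm, Complex.sq_norm, Complex.sq_norm, Complex.ofReal_sub,
    Complex.ofReal_sub, ← Complex.mul_conj, ← Complex.mul_conj, ← Complex.mul_conj,
    ← Complex.mul_conj]
  exact goal2
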